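/- Every doubling metric space has finite Nagata dimension. More precisely, if X is a metric space and N is an integer such that every closed ball of radius 3s in X can be covered by N+1 sets of diameter ≤ s (for all s > 0), then dim_N X ≤ N. -/

import Mathlib

open Metric Set

/-- `X` has Nagata dimension at most `n` (witnessed by some constant `c > 0`):
for every `s > 0` there is a covering by sets of diameter `≤ c * s` such that every
set of diameter `≤ s` meets at most `n + 1` members of the covering. -/
def NagataProp (X : Type*) [MetricSpace X] (n : ℕ) : Prop :=
  ∃ c : ℝ, 0 < c ∧ ∀ s : ℝ, 0 < s → ∃ 𝓑 : Set (Set X),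
    (⋃₀ 𝓑 = univ) ∧
    (∀ B ∈ 𝓑, EMetric.diam B ≤ ENNReal.ofReal (c * s)) ∧
    (∀ E : Set X, EMetric.diam E ≤ ENNReal.ofReal s →
      ∃ T : Finset (Set X), T.card ≤ n + 1 ∧
        ∀ B ∈ 𝓑, (B ∩ E).Nonempty → B ∈ T)

/-- The Nagata (Assouad–Nagata) dimension of a metric space, as an element of `ℕ∞`. -/
noncomputable def nagataDim (X : Type*) [MetricSpace X] : ℕ∞ :=
  sInf {k : ℕ∞ | ∃ n : ℕ, k = n ∧ NagataProp X n}

/-- A maximal `s`-separated set exists. -/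
lemma exists_maximal_separated {X : Type*} [MetricSpace X] {s : ℝ} (hs : 0 ≤ s) :
    ∃ D : Set X, (D.Pairwise fun x y => s < dist x y) ∧
      ∀ y : X, ∃ x ∈ D, dist y x ≤ s := by
  obtain ⟨D, -, hmax⟩ := zorn_subset_nonempty
      {D : Set X | D.Pairwise fun x y => s < dist x y}
      (fun c hc hchain _ => by
        refine ⟨⋃₀ c, ?_, fun t ht => subset_sUnion_of_mem ht⟩
        intro x hx y hy hxy
        obtain ⟨tx, htx, hxtx⟩ := hx
        obtain ⟨ty, hty, hyty⟩ := hy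
        rcases hchain.total htx hty with h | h
        · exact hc hty (h hxtx) hyty hxy
        · exact hc htx hxtx (h hyty) hxy)
      ∅ (pairwise_empty _)
  refine ⟨D, hmax.1, fun y => ?_⟩
  by_contra h
  push_neg at h
  have hyD : y ∉ D := fun hy => by
    have := h y hy
    simp only [dist_self] at this
    linarith
  have hins : insert y D ∈ {D : Set X | D.Pairwise fun x y => s < dist x y} := by
    haveI : Std.Symm (fun x y : X => s < dist x y) := ⟨by intro a b hab; rwa [dist_comm]⟩
    refine pairwise_insert_of_symm.2 ⟨hmax.1, fun x hx _ => ?_⟩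
    · simpa [dist_comm] using h x hx
  exact hyD (hmax.2 hins (subset_insert y D) (mem_insert y D))

lemma dist_le_of_ediam {X : Type*} [MetricSpace X] {E : Set X} {s : ℝ} (hs : 0 ≤ s)
    (h : EMetric.diam E ≤ ENNReal.ofReal s) {x y : X} (hx : x ∈ E) (hy : y ∈ E) :
    dist x y ≤ s := by
  have := (EMetric.edist_le_diam_of_mem hx hy).trans h
  rwa [edist_dist, ENNReal.ofReal_le_ofReal_iff hs] at this

theorem nagataDim_le_of_doubling {X : Type*} [MetricSpace X] (N : ℕ)
    (hdb : ∀ s : ℝ, 0 < s → ∀ x : X, ∃ F : Finset (Set X), F.card ≤ N + 1 ∧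
      closedBall x (3 * s) ⊆ ⋃₀ ↑F ∧ ∀ B ∈ F, EMetric.diam B ≤ ENNReal.ofReal s) :
    nagataDim X ≤ N := by
  have hN : NagataProp X N := by
    refine ⟨2, by norm_num, fun s hs => ?_⟩
    obtain ⟨D, hsep, hcov⟩ := exists_maximal_separated (X := X) hs.le
    refine ⟨(fun x => closedBall x s) '' D, ?_, ?_, ?_⟩
    · refine eq_univ_of_forall fun y => ?_
      obtain ⟨x, hxD, hxy⟩ := hcov y
      exact ⟨closedBall x s, ⟨x, hxD, rfl⟩, by simpa [mem_closedBall] using hxy⟩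
    · rintro B ⟨x, -, rfl⟩
      refine EMetric.diam_le fun p hp q hq => ?_
      rw [edist_dist]
      refine ENNReal.ofReal_le_ofReal ?_
      calc dist p q ≤ dist p x + dist x q := dist_triangle p x q
        _ ≤ s + s := add_le_add (by simpa [mem_closedBall] using hp)
            (by simpa [mem_closedBall, dist_comm] using hq)
        _ = 2 * s := by ring
    · intro E hE
      rcases E.eq_empty_or_nonempty with rfl | ⟨e0, he0⟩
      · exact ⟨∅, by simp⟩
      obtain ⟨F, hFcard, hFcov, hFdiam⟩ := hdb s hs e0
      -- set of centers whose balls meet E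
      set C : Set X := {x ∈ D | (closedBall x s ∩ E).Nonempty} with hC
      have hCsub : ∀ x ∈ C, x ∈ closedBall e0 (3 * s) := by
        rintro x ⟨hxD, p, hp, hpE⟩
        rw [mem_closedBall]
        calc dist x e0 ≤ dist x p + dist p e0 := dist_triangle x p e0
          _ ≤ s + s := add_le_add (by simpa [mem_closedBall, dist_comm] using hp)
              (dist_le_of_ediam hs.le hE hpE he0)
          _ ≤ 3 * s := by linarith
      -- choose for each x ∈ C a member of F containing it
      have hchoice : ∀ x ∈ C, ∃ B ∈ F, x ∈ B := by
        intro x hx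
        obtain ⟨B, hBF, hxB⟩ := hFcov (hCsub x hx)
        exact ⟨B, hBF, hxB⟩
      classical
      set f : X → Set X := fun x =>
        if h : ∃ B ∈ F, x ∈ B then h.choose else ∅ with hf
      have hfF : ∀ x ∈ C, f x ∈ F ∧ x ∈ f x := by
        intro x hx
        have h := hchoice x hx
        simp only [hf, dif_pos h]
        exact ⟨h.choose_spec.1, h.choose_spec.2⟩
      have hinj : C.InjOn f := by
        intro x hx y hy hxy
        by_contra hne
        have hx' := hfF x hx
        have hy' := hfF y hy
        have hdist : dist x y ≤ s :=
          dist_le_of_ediam hs.le (hFdiam _ hx'.1) hx'.2 (hxy ▸ hy'.2)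
        exact absurd hdist (not_le.2 (hsep hx.1 hy.1 hne))
      have hCfin : C.Finite := by
        have : (f '' C).Finite := F.finite_toSet.subset (by
          rintro _ ⟨x, hx, rfl⟩; exact (hfF x hx).1)
        exact (Set.finite_image_iff hinj).1 this
      have hCcard : hCfin.toFinset.card ≤ N + 1 := by
        have h1 : C.ncard = (f '' C).ncard := (Set.ncard_image_of_injOn hinj).symm
        have h2 : (f '' C).ncard ≤ F.card := by
          rw [← Set.ncard_coe_finset]
          exact Set.ncard_le_ncard (by rintro _ ⟨x, hx, rfl⟩; exact (hfF x hx).1)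
            F.finite_toSet
        rw [← Set.ncard_eq_toFinset_card C hCfin]
        exact h1.trans_le (h2.trans hFcard)
      refine ⟨hCfin.toFinset.image (fun x => closedBall x s),
        le_trans (Finset.card_image_le) hCcard, ?_⟩
      rintro B ⟨x, hxD, rfl⟩ hne
      exact Finset.mem_image.2 ⟨x, hCfin.mem_toFinset.2 ⟨hxD, hne⟩, rfl⟩
  exact sInf_le ⟨N, rfl, hN⟩
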